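/- Let G be a ℤ-invariant valued abelian group in which every set Δ_m(g) = {v(g − m·g') : g' ∈ G} admits a maximum, and let (a_i)_{i∈I} be a pseudo-Cauchy sequence in G which has no pseudo-limit in G. Then for every g ∈ G and every m ∈ ℕ the sequence (v(m·a_i − g))_{i∈I} is eventually constant. -/
import Mathlib


universe u

/-- `v : G → Γ` is a valuation making the abelian group `G` a valued abelian group:
`Γ` is a linear order with greatest element `⊤` (denoted `∞` in the paper), `v` is
surjective, `v g = ⊤` iff `g = 0`, and `v (g - h) ≥ min (v g) (v h)`. -/
structure IsValuedGroup {G Γ : Type*} [AddCommGroup G] [LinearOrder Γ] [OrderTop Γ]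
    (v : G → Γ) : Prop where
  surjective : Function.Surjective v
  eq_top_iff : ∀ g : G, v g = ⊤ ↔ g = 0
  min_le_sub : ∀ g h : G, min (v g) (v h) ≤ v (g - h)

/-- A sequence `a` indexed by a linearly ordered set `I` is pseudo-Cauchy if eventually
`v (a i - a j) < v (a j - a k)` for `i < j < k`. -/
def IsPseudoCauchy {G Γ I : Type*} [AddCommGroup G] [LinearOrder Γ] [LinearOrder I]
    (v : G → Γ) (a : I → G) : Prop :=
  ∃ i₀ : I, ∀ i j k : I, i₀ ≤ i → i < j → j < k → v (a i - a j) < v (a j - a k)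

/-- `x` is a pseudo-limit of the sequence `a` if eventually
`v (a i - x) = v (a i - a j)` for `i < j`. -/
def IsPseudoLimit {G Γ I : Type*} [AddCommGroup G] [LinearOrder Γ] [LinearOrder I]
    (v : G → Γ) (a : I → G) (x : G) : Prop :=
  ∃ i₀ : I, ∀ i j : I, i₀ ≤ i → i < j → v (a i - x) = v (a i - a j)

section Aux

variable {G Γ : Type*} [AddCommGroup G] [LinearOrder Γ] [OrderTop Γ] {v : G → Γ}

lemma IsValuedGroup.v_zero (hv : IsValuedGroup v) : v 0 = ⊤ := (hv.eq_top_iff 0).2 rfl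

lemma IsValuedGroup.v_neg (hv : IsValuedGroup v) (x : G) : v (-x) = v x := by
  have h1 : ∀ y : G, v y ≤ v (-y) := by
    intro y
    have := hv.min_le_sub 0 y
    simpa [hv.v_zero] using this
  exact le_antisymm (by simpa using h1 (-x)) (h1 x)

lemma IsValuedGroup.min_le_add (hv : IsValuedGroup v) (x y : G) :
    min (v x) (v y) ≤ v (x + y) := by
  have := hv.min_le_sub x (-y)
  simpa [hv.v_neg, sub_neg_eq_add] using this

lemma IsValuedGroup.add_eq_left (hv : IsValuedGroup v) {x y : G} (h : v x < v y) :
    v (x + y) = v x := by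
  refine le_antisymm ?_ (le_trans (le_min le_rfl h.le) (hv.min_le_add x y))
  by_contra hlt
  push_neg at hlt
  have h2 := hv.min_le_sub (x + y) y
  rw [add_sub_cancel_right] at h2
  exact absurd h2 (not_le.2 (lt_min hlt h))

lemma IsValuedGroup.sub_eq_left (hv : IsValuedGroup v) {x y : G} (h : v x < v y) :
    v (x - y) = v x := by
  rw [sub_eq_add_neg, hv.add_eq_left (by rwa [hv.v_neg])]

/-- Key lemma: if `x` is not a pseudo-limit of the pseudo-Cauchy sequence `a`,
then `v (a i - x)` is eventually constant. -/
lemma eventually_const_of_not_pseudoLimit {I : Type*} [LinearOrder I] [NoMaxOrder I]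
    (hv : IsValuedGroup v) (a : I → G) (i₀ : I)
    (hpc : ∀ i j k : I, i₀ ≤ i → i < j → j < k → v (a i - a j) < v (a j - a k))
    (x : G) (hx : ¬ IsPseudoLimit v a x) :
    ∃ (i₁ : I) (β : Γ), ∀ i, i₁ ≤ i → v (a i - x) = β := by
  -- the value v (a i - a j) does not depend on j > i (for i ≥ i₀)
  have gamma_eq : ∀ i j k : I, i₀ ≤ i → i < j → i < k → v (a i - a j) = v (a i - a k) := by
    have base : ∀ i j k : I, i₀ ≤ i → i < j → j < k → v (a i - a j) = v (a i - a k) := by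
      intro i j k hi hij hjk
      have h1 := hpc i j k hi hij hjk
      have : a i - a k = (a i - a j) + (a j - a k) := by abel
      rw [this, hv.add_eq_left h1]
    intro i j k hi hij hik
    rcases lt_trichotomy j k with h | h | h
    · exact base i j k hi hij h
    · rw [h]
    · exact (base i k j hi hik h).symm
  by_cases hA : ∃ i₁, i₀ ≤ i₁ ∧ ∃ j, i₁ < j ∧ v (a i₁ - x) < v (a i₁ - a j)
  · obtain ⟨i₁, hi₁, j, hj, hlt⟩ := hA
    refine ⟨i₁, v (a i₁ - x), fun i hi => ?_⟩
    rcases eq_or_lt_of_le hi with rfl | hi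
    · rfl
    · have hg : v (a i₁ - x) < v (a i₁ - a i) := by
        rwa [gamma_eq i₁ j i hi₁ hj hi] at hlt
      have : a i - x = (a i₁ - x) + (a i - a i₁) := by abel
      rw [this, hv.add_eq_left (by rwa [show a i - a i₁ = -(a i₁ - a i) by abel, hv.v_neg])]
  · push_neg at hA
    exfalso
    apply hx
    refine ⟨i₀, fun i j hi hij => ?_⟩
    obtain ⟨k, hk⟩ := exists_gt j
    have h1 : v (a i - a j) < v (a j - x) := by
      have h2 := hpc i j k hi hij hk
      have h3 := hA j (hi.trans hij.le) k hk
      exact lt_of_lt_of_le h2 h3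
    have : a i - x = (a i - a j) + (a j - x) := by abel
    rw [this, hv.add_eq_left h1]

end Aux

/-- Let `G` be a ℤ-invariant valued abelian group in which every set
`Δ_m(g) = {v (g - m • g') : g' ∈ G}` admits a maximum, and let `(a_i)_{i ∈ I}` be a
pseudo-Cauchy sequence in `G` which has no pseudo-limit in `G`. Then for every `g ∈ G` and
every `m ∈ ℕ` the sequence `(v (m • a_i - g))_{i ∈ I}` is eventually constant. -/
theorem eventually_constant_of_no_pseudoLimit {G Γ : Type u} [AddCommGroup G]
    [LinearOrder Γ] [OrderTop Γ] (v : G → Γ) (hv : IsValuedGroup v)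
    (hinv : ∀ (g : G) (n : ℕ), 0 < n → v (n • g) = v g)
    (hdelta : ∀ (g : G) (m : ℕ),
      ∃ δ : Γ, IsGreatest {δ' : Γ | ∃ g' : G, v (g - m • g') = δ'} δ)
    (I : Type u) [LinearOrder I] [WellFoundedLT I] [NoMaxOrder I] [Nonempty I]
    (a : I → G) (hpc : IsPseudoCauchy v a)
    (hnl : ∀ x : G, ¬ IsPseudoLimit v a x)
    (g : G) (m : ℕ) :
    ∃ (i₀ : I) (γ : Γ), ∀ i : I, i₀ ≤ i → v (m • a i - g) = γ := by
  rcases Nat.eq_zero_or_pos m with rfl | hm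
  · exact ⟨Classical.arbitrary I, v (-g), fun i _ => by simp⟩
  obtain ⟨δ, ⟨g', hg'⟩, hmax⟩ := hdelta g m
  obtain ⟨i₀, hpc⟩ := hpc
  obtain ⟨i₁, β, hβ⟩ := eventually_const_of_not_pseudoLimit hv a i₀ hpc g' (hnl g')
  refine ⟨i₁, min β δ, fun i hi => ?_⟩
  have hdecomp : m • a i - g = m • (a i - g') - (g - m • g') := by
    rw [smul_sub]; abel
  have hu : v (m • (a i - g')) = β := by rw [hinv _ _ hm, hβ i hi]
  have hupper : v (m • a i - g) ≤ δ := by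
    have : v (m • a i - g) = v (g - m • a i) := by
      rw [show m • a i - g = -(g - m • a i) by abel, hv.v_neg]
    rw [this]
    exact hmax ⟨a i, rfl⟩
  rcases lt_trichotomy β δ with h | h | h
  · rw [hdecomp, hv.sub_eq_left (by rw [hu, hg']; exact h), hu, min_eq_left h.le]
  · subst h
    rw [min_self]
    refine le_antisymm hupper ?_
    have := hv.min_le_sub (m • (a i - g')) (g - m • g')
    rw [hu, hg', min_self] at this
    rwa [hdecomp]
  · have : v (m • a i - g) = δ := by
      rw [hdecomp, show m • (a i - g') - (g - m • g') = -((g - m • g') - m • (a i - g')) by abel,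
        hv.v_neg, hv.sub_eq_left (by rw [hu, hg']; exact h), hg']
    rw [this, min_eq_right h.le]
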